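/- If W is a continuous distance monoid with coinit(W) = ω, then for every n ∈ ℕ there is an initial sequence α : ω → W⁺ such that n·α(k+1) ≤ α(k) for all k ∈ ω. -/

import Mathlib

/-- A complete distance monoid: a commutative positively linearly ordered monoid whose
order is a complete linear order with least element `0`, and in which addition
distributes over infima. -/
class CompleteDistMonoid (W : Type*) extends AddCommMonoid W, CompleteLinearOrder W where
  bot_eq_zero : (⊥ : W) = 0
  add_le_add_left : ∀ a b : W, a ≤ b → ∀ c : W, c + a ≤ c + b
  add_le_add_right : ∀ a b : W, a ≤ b → ∀ c : W, a + c ≤ b + c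
  add_sInf : ∀ (A : Set W) (b : W), b + sInf A = ⨅ a ∈ A, (a + b)

/-- `W` is continuous at `0` if `0 = inf {a + b | a, b ∈ W⁺}` (where `W⁺ = W \ {0}`). -/
def ContinuousAtZero (W : Type*) [CompleteDistMonoid W] : Prop :=
  sInf {c : W | ∃ a b : W, a ≠ 0 ∧ b ≠ 0 ∧ c = a + b} = 0

/-- An initial sequence in `W` with domain the ordinal `δ`: an order-reversing map into
`W⁺ = W \ {0}` that is coinitial in `W⁺`. -/
def IsInitialSeq {W : Type*} [Zero W] [Preorder W] (δ : Ordinal) (s : Ordinal → W) : Prop :=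
  (∀ i, i < δ → s i ≠ 0) ∧
  (∀ i j : Ordinal, i ≤ j → j < δ → s j ≤ s i) ∧
  ∀ a : W, a ≠ 0 → ∃ β, β < δ ∧ s β ≤ a

/-- The coinitiality of `W`: the least ordinal that is the domain of an initial sequence. -/
noncomputable def coinit (W : Type*) [Zero W] [Preorder W] : Ordinal :=
  sInf {δ : Ordinal | ∃ s : Ordinal → W, IsInitialSeq δ s}

/-- If `coinit W = ω`, then for every `n` there is an initial sequence `α : ω → W⁺` with
`n • α (k+1) ≤ α k` for all `k`. -/
theorem stmt1 (W : Type*) [CompleteDistMonoid W] (hW : ContinuousAtZero W)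
    (hco : coinit W = Ordinal.omega0) (n : ℕ) :
    ∃ α : ℕ → W,
      (∀ k : ℕ, α k ≠ 0) ∧
      (∀ i j : ℕ, i ≤ j → α j ≤ α i) ∧
      (∀ a : W, a ≠ 0 → ∃ k : ℕ, α k ≤ a) ∧
      ∀ k : ℕ, n • α (k + 1) ≤ α k := by
  classical
  -- extract an initial sequence of length ω
  have hne : {δ : Ordinal | ∃ s : Ordinal → W, IsInitialSeq δ s}.Nonempty := by
    by_contra h
    rw [Set.not_nonempty_iff_eq_empty] at h
    rw [coinit, h] at hco
    have h0 : sInf (∅ : Set Ordinal) = 0 := by simp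
    rw [h0] at hco
    exact Ordinal.omega0_ne_zero hco.symm
  have hmem := csInf_mem hne
  rw [show sInf {δ : Ordinal | ∃ s : Ordinal → W, IsInitialSeq δ s} = coinit W from rfl,
    hco] at hmem
  obtain ⟨s, hs0, hsmono, hscoin⟩ := hmem
  set t : ℕ → W := fun k => s k with ht
  have ht0 : ∀ k, t k ≠ 0 := fun k => hs0 _ (Ordinal.nat_lt_omega0 k)
  have htmono : ∀ i j : ℕ, i ≤ j → t j ≤ t i := fun i j hij =>
    hsmono _ _ (by exact_mod_cast hij) (Ordinal.nat_lt_omega0 j)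
  have htcoin : ∀ a : W, a ≠ 0 → ∃ k : ℕ, t k ≤ a := by
    intro a ha
    obtain ⟨β, hβ, hle⟩ := hscoin a ha
    obtain ⟨k, rfl⟩ := Ordinal.lt_omega0.1 hβ
    exact ⟨k, hle⟩
  -- basic order facts
  have hbot : ∀ a : W, (0 : W) ≤ a := fun a =>
    CompleteDistMonoid.bot_eq_zero (W := W) ▸ bot_le
  have hpos : ∀ a : W, a ≠ 0 → 0 < a := fun a ha => lt_of_le_of_ne (hbot a) (Ne.symm ha)
  have haddl := CompleteDistMonoid.add_le_add_left (W := W)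
  have haddr := CompleteDistMonoid.add_le_add_right (W := W)
  have hsmul_mono : ∀ (m : ℕ) (a b : W), a ≤ b → m • a ≤ m • b := by
    intro m a b hab
    induction m with
    | zero => simp
    | succ k ih =>
      rw [succ_nsmul, succ_nsmul]
      exact le_trans (haddr _ _ ih a) (haddl _ _ hab _)
  have hsmul_le : ∀ (m k : ℕ) (a : W), m ≤ k → m • a ≤ k • a := by
    intro m k a hmk
    obtain ⟨d, rfl⟩ := Nat.exists_eq_add_of_le hmk
    rw [add_nsmul]
    calc m • a = m • a + 0 := (add_zero _).symm
    _ ≤ m • a + d • a := haddl _ _ (hbot _) _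
  -- halving
  have hhalf : ∀ a : W, a ≠ 0 → ∃ b : W, b ≠ 0 ∧ b + b ≤ a := by
    intro a ha
    have : sInf {c : W | ∃ x y : W, x ≠ 0 ∧ y ≠ 0 ∧ c = x + y} < a := by
      rw [hW]; exact hpos a ha
    obtain ⟨c, ⟨x, y, hx, hy, rfl⟩, hca⟩ := sInf_lt_iff.1 this
    refine ⟨min x y, ?_, ?_⟩
    · exact ne_of_gt (lt_min (hpos x hx) (hpos y hy))
    · calc min x y + min x y ≤ min x y + y := haddl _ _ (min_le_right x y) _
      _ ≤ x + y := haddr _ _ (min_le_left x y) _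
      _ ≤ x + y := le_refl _
      _ ≤ a := hca.le
  -- n-division
  have hdiv : ∀ a : W, a ≠ 0 → ∃ b : W, b ≠ 0 ∧ n • b ≤ a := by
    intro a ha
    have hpow : ∀ m : ℕ, ∃ b : W, b ≠ 0 ∧ (2 ^ m) • b ≤ a := by
      intro m
      induction m with
      | zero => exact ⟨a, ha, by simp⟩
      | succ k ih =>
        obtain ⟨b, hb, hba⟩ := ih
        obtain ⟨c, hc, hcb⟩ := hhalf b hb
        refine ⟨c, hc, ?_⟩
        have : (2 ^ (k + 1)) • c = (2 ^ k) • (c + c) := by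
          rw [nsmul_add, pow_succ, mul_two, add_nsmul]
        rw [this]
        exact le_trans (hsmul_mono _ _ _ hcb) hba
    obtain ⟨b, hb, hba⟩ := hpow n
    exact ⟨b, hb, le_trans (hsmul_le _ _ _ (Nat.lt_two_pow_self (n := n)).le) hba⟩
  -- recursive construction
  let F : ∀ k : ℕ, {x : W // x ≠ 0} → {x : W // x ≠ 0} := fun k p =>
    ⟨min (min (t (k + 1)) p.1) (hdiv p.1 p.2).choose,
      ne_of_gt (lt_min (lt_min (hpos _ (ht0 _)) (hpos _ p.2))
        (hpos _ (hdiv p.1 p.2).choose_spec.1))⟩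
  let f : ℕ → {x : W // x ≠ 0} := fun k => Nat.rec ⟨t 0, ht0 0⟩ F k
  refine ⟨fun k => (f k).1, fun k => (f k).2, ?_, ?_, ?_⟩
  · have step : ∀ k : ℕ, (f (k + 1)).1 ≤ (f k).1 := fun k =>
      le_trans (min_le_left _ _) (min_le_right _ _)
    intro i j hij
    induction j with
    | zero => simp_all
    | succ k ih =>
      rcases Nat.lt_or_ge i (k + 1) with h | h
      · exact le_trans (step k) (ih (Nat.lt_succ_iff.1 h))
      · have : i = k + 1 := le_antisymm hij h
        subst this; exact le_refl _
  · intro a ha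
    obtain ⟨k, hk⟩ := htcoin a ha
    refine ⟨k, le_trans ?_ hk⟩
    cases k with
    | zero => exact le_refl _
    | succ m => exact le_trans (min_le_left _ _) (min_le_left _ _)
  · intro k
    have h1 : (f (k + 1)).1 ≤ (hdiv (f k).1 (f k).2).choose := min_le_right _ _
    exact le_trans (hsmul_mono _ _ _ h1) (hdiv (f k).1 (f k).2).choose_spec.2
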